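/- (Lemma 13: Morita equivalence of H_κ with its spherical subalgebra.) Set κ_l = 0 and assume that κ_i − κ_j ≠ (j−i)/l for all integers 0 < i < j ≤ l (equivalently, c_i + c_{i+1} + ⋯ + c_{j−1} ≠ 0 for 0 < i < j ≤ l, where c_i = κ_i − κ_{i+1} − 1/l + δ_{i,0}). Then e_0 H_κ e_0 is a ring with multiplicative identity e_0, and the functor M ↦ e_0·M from the category of left H_κ-modules to the category of left e_0 H_κ e_0-modules is an equivalence of categories; in particular the rings H_κ and e_0 H_κ e_0 are Morita equivalent. -/

import Mathlib

open CategoryTheory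

section Corner

variable {A : Type*} [Ring A]

/-- The corner set `ε A ε = {ε r ε : r ∈ A}` of a ring `A` at an element `ε`,
as a non-unital subring. -/
def cornerSubring (ε : A) : NonUnitalSubring A where
  carrier := {w | ∃ r : A, w = ε * r * ε}
  zero_mem' := ⟨0, by simp⟩
  add_mem' := by
    rintro a b ⟨r, rfl⟩ ⟨s, rfl⟩
    exact ⟨r + s, by rw [mul_add, add_mul]⟩
  neg_mem' := by
    rintro a ⟨r, rfl⟩
    exact ⟨-r, by simp⟩
  mul_mem' := by
    rintro a b ⟨r, rfl⟩ ⟨s, rfl⟩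
    exact ⟨r * ε * ε * s, by noncomm_ring⟩

/-- If `ε` is an idempotent, the corner `ε A ε` is a unital ring
with multiplicative identity `ε`. -/
instance cornerRing (ε : A) [hε : Fact (IsIdempotentElem ε)] :
    Ring ↥(cornerSubring ε) :=
  { (inferInstance : NonUnitalRing ↥(cornerSubring ε)) with
    one := ⟨ε, ε, by rw [hε.out, hε.out]⟩
    one_mul := fun a => Subtype.ext (show ε * (a : A) = (a : A) by
      obtain ⟨r, hr⟩ := a.2
      rw [hr, ← mul_assoc, ← mul_assoc, hε.out])
    mul_one := fun a => Subtype.ext (show (a : A) * ε = (a : A) by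
      obtain ⟨r, hr⟩ := a.2
      rw [hr, mul_assoc, hε.out]) }

end Corner

section CornerModule

variable {A : Type*} [Ring A] (ε : A)
variable (M : Type*) [AddCommGroup M] [Module A M]

/-- For a left `A`-module `M`, the subgroup `ε M = {ε m : m ∈ M}`. -/
def cornerSubgroup : AddSubgroup M :=
  (DistribMulAction.toAddMonoidHom M ε).range

instance cornerSMul : SMul ↥(cornerSubring ε) ↥(cornerSubgroup ε M) :=
  ⟨fun s m => ⟨(s : A) • (m : M), by
    obtain ⟨r, hr⟩ := s.2
    exact ⟨(r * ε) • (m : M), by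
      show ε • (r * ε) • (m : M) = (s : A) • (m : M)
      rw [smul_smul, hr, mul_assoc]⟩⟩⟩

@[simp] lemma corner_smul_coe (s : ↥(cornerSubring ε)) (m : ↥(cornerSubgroup ε M)) :
    ((s • m : ↥(cornerSubgroup ε M)) : M) = (s : A) • (m : M) := rfl

/-- `ε M` is a module over the corner ring `ε A ε`. -/
instance cornerModule [hε : Fact (IsIdempotentElem ε)] :
    Module ↥(cornerSubring ε) ↥(cornerSubgroup ε M) where
  one_smul m := Subtype.ext (by
    obtain ⟨m', hm'⟩ := m.2
    show (((1 : ↥(cornerSubring ε)) : A)) • (m : M) = (m : M)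
    have h1 : ((1 : ↥(cornerSubring ε)) : A) = ε := rfl
    rw [h1, ← hm']
    show ε • ε • m' = ε • m'
    rw [smul_smul, hε.out])
  mul_smul s t m := Subtype.ext (by
    show ((s * t : ↥(cornerSubring ε)) : A) • (m : M) = (s : A) • (t : A) • (m : M)
    rw [show ((s * t : ↥(cornerSubring ε)) : A) = (s : A) * (t : A) from rfl, mul_smul])
  smul_zero s := Subtype.ext (by
    show (s : A) • ((0 : ↥(cornerSubgroup ε M)) : M) = 0
    simp)
  smul_add s m n := Subtype.ext (by
    show (s : A) • ((m : M) + (n : M)) = (s : A) • (m : M) + (s : A) • (n : M)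
    rw [smul_add])
  add_smul s t m := Subtype.ext (by
    show ((s + t : ↥(cornerSubring ε)) : A) • (m : M) = (s : A) • (m : M) + (t : A) • (m : M)
    rw [show ((s + t : ↥(cornerSubring ε)) : A) = (s : A) + (t : A) from rfl, add_smul])
  zero_smul m := Subtype.ext (by
    show ((0 : ↥(cornerSubring ε)) : A) • (m : M) = 0
    simp)

end CornerModule

section CornerFunctor

universe v u

variable {A : Type u} [Ring A]

/-- The functor `M ↦ ε M` from the category of left `A`-modules to the category of left
modules over the corner ring `ε A ε` of an idempotent `ε`. -/
noncomputable def cornerFunctor (ε : A) [hε : Fact (IsIdempotentElem ε)] :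
    ModuleCat.{v} A ⥤ ModuleCat.{v} ↥(cornerSubring ε) where
  obj M := ModuleCat.of ↥(cornerSubring ε) ↥(cornerSubgroup ε M)
  map {M N} f := ModuleCat.ofHom <|
    { toFun := fun m => ⟨f m.1, by
        obtain ⟨m', hm'⟩ := m.2
        exact ⟨f m', by
          show ε • f m' = f m.1
          rw [← map_smul f.hom, ← hm']; rfl⟩⟩
      map_add' := fun m n => Subtype.ext (by
        show f (m.1 + n.1) = f m.1 + f n.1
        rw [map_add])
      map_smul' := fun s m => Subtype.ext (by
        show f ((s : A) • m.1) = (s : A) • f m.1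
        rw [map_smul f.hom]) }
  map_id M := by ext m; rfl
  map_comp f g := by ext m; rfl

end CornerFunctor

section Morita

universe v
variable {A : Type} [Ring A] (ε : A) [hε : Fact (IsIdempotentElem ε)]

lemma corner_mem_smul {M : Type*} [AddCommGroup M] [Module A M]
    (x : ↥(cornerSubgroup ε M)) : ε • (x : M) = (x : M) := by
  obtain ⟨w, hw⟩ := x.2
  have hw' : ε • w = (x : M) := hw
  rw [← hw', smul_smul, hε.out]

variable {ι : Type*} (s : Finset ι) (a b : ι → A)

theorem corner_faithful (hab : ∑ k ∈ s, a k * ε * b k = 1) :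
    (cornerFunctor.{v} ε).Faithful := by
  constructor
  intro M N f g h
  have key : ∀ x : ↥(cornerSubgroup ε M), f.hom (x : ↑M) = g.hom (x : ↑M) := by
    intro x
    exact congrArg Subtype.val (LinearMap.congr_fun (congrArg ModuleCat.Hom.hom h) x)
  apply ModuleCat.hom_ext
  apply LinearMap.ext
  intro m
  have hm : m = ∑ k ∈ s, a k • (ε • (b k • m)) := by
    conv_lhs => rw [← one_smul A m, ← hab]
    rw [Finset.sum_smul]
    exact Finset.sum_congr rfl fun k _ => by rw [mul_smul, mul_smul]
  rw [hm, map_sum, map_sum]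
  refine Finset.sum_congr rfl fun k _ => ?_
  rw [map_smul f.hom, map_smul g.hom]
  exact congrArg (a k • ·) (key ⟨ε • (b k • m), ⟨b k • m, rfl⟩⟩)

theorem corner_full (hab : ∑ k ∈ s, a k * ε * b k = 1) :
    (cornerFunctor.{v} ε).Full := by
  constructor
  intro M N φ₀
  let φ : ↥(cornerSubgroup ε (M : Type v)) →ₗ[↥(cornerSubring ε)]
    ↥(cornerSubgroup ε (N : Type v)) := φ₀.hom
  let X : ∀ (m : ↑M) (k : ι), ↥(cornerSubgroup ε (M : Type v)) :=
    fun m k => ⟨ε • (b k • m), ⟨b k • m, rfl⟩⟩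
  let vv : ↑M → ↑N := fun m => ∑ k ∈ s, a k • (φ (X m k) : ↑N)
  have hveps : ∀ y : ↥(cornerSubgroup ε (N : Type v)), ε • (y : ↑N) = (y : ↑N) :=
    corner_mem_smul ε
  have key : ∀ (c : A) (m : ↑M) (k : ι),
      X (c • m) k = ∑ j ∈ s, (⟨ε * (b k * c * a j) * ε, ⟨b k * c * a j, rfl⟩⟩ :
        ↥(cornerSubring ε)) • X m j := by
    intro c m k
    apply Subtype.ext
    rw [AddSubmonoidClass.coe_finset_sum]
    have he : ∀ j ∈ s, (((⟨ε * (b k * c * a j) * ε, ⟨b k * c * a j, rfl⟩⟩ :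
        ↥(cornerSubring ε)) • X m j : ↥(cornerSubgroup ε (M : Type v))) : ↑M)
        = (ε * b k * c * (a j * ε * b j)) • m := by
      intro j _
      rw [corner_smul_coe]
      show (ε * (b k * c * a j) * ε) • (ε • (b j • m)) = _
      rw [smul_smul, smul_smul, mul_assoc _ ε ε, hε.out.eq]
      congr 1
      noncomm_ring
    rw [Finset.sum_congr rfl he, ← Finset.sum_smul, ← Finset.mul_sum, hab, mul_one]
    show ε • (b k • (c • m)) = _
    rw [smul_smul, smul_smul]
  refine ⟨ModuleCat.ofHom { toFun := vv, map_add' := ?_, map_smul' := ?_ }, ?_⟩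
  · intro m m'
    have hX : ∀ k, X (m + m') k = X m k + X m' k := fun k => Subtype.ext (by
      show ε • (b k • (m + m')) = ε • (b k • m) + ε • (b k • m')
      rw [smul_add, smul_add])
    show vv (m + m') = vv m + vv m'
    show ∑ k ∈ s, a k • (φ (X (m + m') k) : ↑N) = _
    rw [Finset.sum_congr rfl fun k _ => by rw [hX k, map_add]]
    rw [← Finset.sum_add_distrib]
    refine Finset.sum_congr rfl fun k _ => ?_
    show a k • ((φ (X m k) : ↑N) + (φ (X m' k) : ↑N)) = _
    rw [smul_add]
  · intro c m
    show vv (c • m) = c • vv m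
    show ∑ k ∈ s, a k • (φ (X (c • m) k) : ↑N) = _
    have step1 : ∀ k, (φ (X (c • m) k) : ↑N)
        = ∑ j ∈ s, (ε * (b k * c * a j) * ε) • (φ (X m j) : ↑N) := by
      intro k
      rw [key c m k, map_sum, AddSubmonoidClass.coe_finset_sum]
      exact Finset.sum_congr rfl fun j _ => by rw [map_smul, corner_smul_coe]
    rw [Finset.sum_congr rfl fun k _ => by rw [step1 k]]
    simp_rw [Finset.smul_sum, smul_smul]
    rw [Finset.sum_comm]
    show _ = c • ∑ k ∈ s, a k • (φ (X m k) : ↑N)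
    rw [Finset.smul_sum]
    refine Finset.sum_congr rfl fun j _ => ?_
    rw [← Finset.sum_smul]
    have h3 : ∑ k ∈ s, a k * (ε * (b k * c * a j) * ε) = c * (a j * ε) := by
      rw [Finset.sum_congr rfl fun k _ =>
        show a k * (ε * (b k * c * a j) * ε) = (a k * ε * b k) * (c * a j * ε) by noncomm_ring,
        ← Finset.sum_mul, hab, one_mul]
      noncomm_ring
    rw [h3, mul_smul, mul_smul, hveps, smul_smul]
  · apply ModuleCat.hom_ext
    apply LinearMap.ext
    intro x₀
    apply Subtype.ext
    let x : ↥(cornerSubgroup ε (M : Type v)) := x₀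
    show vv (x : ↑M) = (φ x : ↑N)
    have hXx : ∀ k, X (x : ↑M) k = (⟨ε * b k * ε, ⟨b k, rfl⟩⟩ : ↥(cornerSubring ε)) • x := by
      intro k
      apply Subtype.ext
      rw [corner_smul_coe]
      show ε • (b k • (x : ↑M)) = (ε * b k * ε) • (x : ↑M)
      rw [smul_smul]
      conv_rhs => rw [mul_smul, corner_mem_smul ε x]
    show ∑ k ∈ s, a k • (φ (X (x : ↑M) k) : ↑N) = _
    rw [Finset.sum_congr rfl fun k _ => by rw [hXx k, map_smul, corner_smul_coe]]
    simp_rw [smul_smul]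
    rw [← Finset.sum_smul]
    have h4 : ∑ k ∈ s, a k * (ε * b k * ε) = ε := by
      rw [Finset.sum_congr rfl fun k _ =>
        show a k * (ε * b k * ε) = (a k * ε * b k) * ε by noncomm_ring,
        ← Finset.sum_mul, hab, one_mul]
    rw [h4, hveps]

/-- Right multiplication by `a : A` on `εA`, as a map of left `εAε`-modules. -/
def cornerRmul (a : A) :
    ↥(cornerSubgroup ε (A : Type)) →ₗ[↥(cornerSubring ε)] ↥(cornerSubgroup ε (A : Type)) where
  toFun x := ⟨(x : A) * a, by
    obtain ⟨y, hy⟩ := x.2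
    exact ⟨y * a, by show ε • (y * a) = (x : A) * a
                     rw [smul_eq_mul, ← mul_assoc]
                     exact congrArg (· * a) hy⟩⟩
  map_add' x y := Subtype.ext (by show ((x : A) + (y : A)) * a = (x : A) * a + (y : A) * a
                                  rw [add_mul])
  map_smul' c x := Subtype.ext (by
    show ((c : A) * (x : A)) * a = (c : A) * ((x : A) * a)
    rw [mul_assoc])

variable (N : Type v) [AddCommGroup N]
  [Module ↥(cornerSubring ε) N]

/-- The `A`-module structure on `Hom_{εAε}(εA, N)` given by `(a • f) x = f (x a)`. -/
def cornerHomModule :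
    Module A (↥(cornerSubgroup ε (A : Type)) →ₗ[↥(cornerSubring ε)] N) where
  smul a f := f.comp (cornerRmul ε a)
  one_smul f := LinearMap.ext fun x => by
    show f ((cornerRmul ε 1) x) = f x
    congr 1; exact Subtype.ext (mul_one _)
  mul_smul a c f := LinearMap.ext fun x => by
    show f ((cornerRmul ε (a * c)) x) = f ((cornerRmul ε c) ((cornerRmul ε a) x))
    exact congrArg f (Subtype.ext (mul_assoc _ _ _).symm)
  smul_zero a := rfl
  smul_add a f g := rfl
  add_smul a c f := LinearMap.ext fun x => by
    show f ((cornerRmul ε (a + c)) x) = f ((cornerRmul ε a) x) + f ((cornerRmul ε c) x)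
    rw [← map_add]
    congr 1; exact Subtype.ext (mul_add _ _ _)
  zero_smul f := LinearMap.ext fun x => by
    show f ((cornerRmul ε 0) x) = 0
    rw [show (cornerRmul ε 0) x = 0 from Subtype.ext (mul_zero _), map_zero]

/-- The map `εa ↦ εaε` from `εA` to the corner ring `εAε`. -/
def cornerRmulEps (x : ↥(cornerSubgroup ε (A : Type))) : ↥(cornerSubring ε) :=
  ⟨(x : A) * ε, by
    obtain ⟨y, hy⟩ := x.2
    exact ⟨y, by rw [← hy]; show (ε • y) * ε = ε * y * ε; rw [smul_eq_mul]⟩⟩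

omit hε in
@[simp] lemma cornerRmulEps_coe (x : ↥(cornerSubgroup ε (A : Type))) :
    (cornerRmulEps ε x : A) = (x : A) * ε := rfl

lemma cornerRmulEps_add (x y : ↥(cornerSubgroup ε (A : Type))) :
    cornerRmulEps ε (x + y) = cornerRmulEps ε x + cornerRmulEps ε y :=
  Subtype.ext (add_mul _ _ _)

lemma cornerRmulEps_smul (s : ↥(cornerSubring ε)) (x : ↥(cornerSubgroup ε (A : Type))) :
    cornerRmulEps ε (s • x) = s * cornerRmulEps ε x :=
  Subtype.ext (mul_assoc _ _ _)

/-- For `n : N` the `εAε`-linear map `εA → N`, `x ↦ (xε) • n`. -/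
def cornerElt (n : N) : ↥(cornerSubgroup ε (A : Type)) →ₗ[↥(cornerSubring ε)] N where
  toFun x := cornerRmulEps ε x • n
  map_add' x y := by
    show cornerRmulEps ε (x + y) • n = cornerRmulEps ε x • n + cornerRmulEps ε y • n
    rw [cornerRmulEps_add, add_smul]
  map_smul' s x := by
    show cornerRmulEps ε (s • x) • n = s • (cornerRmulEps ε x • n)
    rw [cornerRmulEps_smul, mul_smul]

theorem corner_essSurj : (cornerFunctor.{v} ε).EssSurj := by
  constructor
  intro N
  letI modH := cornerHomModule ε (N : Type v)
  have hsmul : ∀ (c : A) (f : ↥(cornerSubgroup ε (A : Type)) →ₗ[↥(cornerSubring ε)] (N : Type v))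
      (x : ↥(cornerSubgroup ε (A : Type))),
      (c • f) x = f ((cornerRmul ε c) x) := fun _ _ _ => rfl
  let εe : ↥(cornerSubgroup ε (A : Type)) :=
    ⟨ε, ⟨1, by show ε • (1 : A) = ε; rw [smul_eq_mul, mul_one]⟩⟩
  have heps : ∀ n : (N : Type v), ε • cornerElt ε (N : Type v) n = cornerElt ε (N : Type v) n := by
    intro n
    apply LinearMap.ext
    intro x
    rw [hsmul]
    show cornerRmulEps ε ((cornerRmul ε ε) x) • n = cornerRmulEps ε x • n
    congr 1
    apply Subtype.ext
    show ((x : A) * ε) * ε = (x : A) * ε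
    rw [mul_assoc, hε.out.eq]
  have honeeq : cornerRmulEps ε εe = 1 := by
    apply Subtype.ext
    show ε * ε = ε
    exact hε.out
  let MH := ModuleCat.of A (↥(cornerSubgroup ε (A : Type)) →ₗ[↥(cornerSubring ε)] (N : Type v))
  let Φ : ↥(cornerSubgroup ε
        (↥(cornerSubgroup ε (A : Type)) →ₗ[↥(cornerSubring ε)] (N : Type v)))
      ≃ₗ[↥(cornerSubring ε)] (N : Type v) :=
    { toFun := fun g => (g : ↥(cornerSubgroup ε (A : Type)) →ₗ[↥(cornerSubring ε)] (N : Type v)) εe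
      map_add' := fun g h => rfl
      map_smul' := fun s g => by
        show ((s • g : ↥(cornerSubgroup ε _)) :
          ↥(cornerSubgroup ε (A : Type)) →ₗ[↥(cornerSubring ε)] (N : Type v)) εe = _
        rw [corner_smul_coe, hsmul]
        have h5 : (cornerRmul ε (s : A)) εe = s • εe := by
          apply Subtype.ext
          show ε * (s : A) = (s : A) * ε
          obtain ⟨r, hr⟩ := s.2
          rw [hr, show ε * (ε * r * ε) = (ε * ε) * r * ε by noncomm_ring,
            show (ε * r * ε) * ε = ε * r * (ε * ε) by noncomm_ring, hε.out.eq]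
        rw [h5, map_smul]
        rfl
      invFun := fun n => ⟨cornerElt ε (N : Type v) n, ⟨cornerElt ε (N : Type v) n, heps n⟩⟩
      left_inv := fun g => by
        apply Subtype.ext
        apply LinearMap.ext
        intro x
        show cornerRmulEps ε x •
          ((g : ↥(cornerSubgroup ε (A : Type)) →ₗ[↥(cornerSubring ε)] (N : Type v)) εe) = _
        rw [← map_smul (g : ↥(cornerSubgroup ε (A : Type)) →ₗ[↥(cornerSubring ε)] (N : Type v))]
        obtain ⟨g', hg'⟩ := g.2
        have hg'' : ε • g' =
          (g : ↥(cornerSubgroup ε (A : Type)) →ₗ[↥(cornerSubring ε)] (N : Type v)) := hg'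
        rw [← hg'', hsmul, hsmul]
        congr 1
        apply Subtype.ext
        show ((cornerRmulEps ε x : A) • (ε : A)) * ε = (x : A) * ε
        rw [smul_eq_mul]
        show (((x : A) * ε) * ε) * ε = (x : A) * ε
        rw [mul_assoc, hε.out.eq, mul_assoc, hε.out.eq]
      right_inv := fun n => by
        show cornerRmulEps ε εe • n = n
        rw [honeeq, one_smul] }
  exact ⟨MH, ⟨Φ.toModuleIso⟩⟩

end Morita
open LaurentPolynomial

noncomputable section

/-- The ℂ-algebra `L = ℂ[z, z⁻¹]` of Laurent polynomials (`T n` is the monomial `zⁿ`). -/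
abbrev Lau : Type := LaurentPolynomial ℂ

/-- Multiplication by `z`, as a ℂ-linear endomorphism of `L`. -/
def Zmul : Module.End ℂ Lau := LinearMap.mulLeft ℂ (T 1)

/-- Multiplication by `z⁻¹`, as a ℂ-linear endomorphism of `L`. -/
def Zinv : Module.End ℂ Lau := LinearMap.mulLeft ℂ (T (-1))

/-- The ℂ-algebra automorphism `Γ` of `L` determined by `Γ(z) = ζ⁻¹ z`,
i.e. `Γ(zⁿ) = ζ⁻ⁿ zⁿ`. -/
def Gam (ζ : ℂ) : Module.End ℂ Lau :=
  (Finsupp.lsum ℂ fun (n : ℤ) => LinearMap.toSpanSingleton ℂ Lau ((ζ⁻¹ ^ n) • T n)) ∘ₗ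
    (AddMonoidAlgebra.coeffLinearEquiv ℂ).toLinearMap

/-- The formal derivative `d/dz : zⁿ ↦ n zⁿ⁻¹` on `L`. -/
def Deriv : Module.End ℂ Lau :=
  (Finsupp.lsum ℂ fun (n : ℤ) => LinearMap.toSpanSingleton ℂ Lau ((n : ℂ) • T (n - 1))) ∘ₗ
    (AddMonoidAlgebra.coeffLinearEquiv ℂ).toLinearMap

/-- The idempotent `e_i = (1/l)·Σ_{j=0}^{l−1} ζ^{ij} Γ^j` of `ℂ(ℤ/lℤ)`, regarded as an
endomorphism of `L`. -/
def eIdem (l : ℕ) (ζ : ℂ) (i : Fin l) : Module.End ℂ Lau :=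
  (l : ℂ)⁻¹ • ∑ j ∈ Finset.range l, (ζ ^ ((i : ℕ) * j)) • (Gam ζ) ^ j

/-- The Dunkl operator `∂_κ = d/dz + l z⁻¹ Σ_{i=0}^{l−1} κ_i e_i` (where `κ_0 = 0`). -/
def Dunkl (l : ℕ) (ζ : ℂ) (κ : Fin l → ℂ) : Module.End ℂ Lau :=
  Deriv + (l : ℂ) • (Zinv * ∑ i : Fin l, κ i • eIdem l ζ i)

/-- The rational Cherednik algebra `H_κ` of type `ℤ/lℤ`: the unital ℂ-subalgebra of
`End_ℂ(L)` generated by `Z`, `Γ` and `∂_κ`. -/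
def Cher (l : ℕ) (ζ : ℂ) (κ : Fin l → ℂ) : Subalgebra ℂ (Module.End ℂ Lau) :=
  Algebra.adjoin ℂ {Zmul, Gam ζ, Dunkl l ζ κ}


section Computation

open Polynomial

variable (l : ℕ) [NeZero l] (ζ : ℂ) (κ : Fin l → ℂ)

lemma T_single (n : ℤ) : (T n : Lau) = AddMonoidAlgebra.single n 1 := rfl

lemma Zmul_T (n : ℤ) : Zmul (T n) = T (n + 1) := by
  show (T 1 * T n : Lau) = T (n + 1)
  rw [← LaurentPolynomial.T_add, add_comm]

lemma Zinv_T (n : ℤ) : Zinv (T n) = T (n - 1) := by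
  show (T (-1) * T n : Lau) = T (n - 1)
  rw [← LaurentPolynomial.T_add, neg_add_eq_sub]

lemma Gam_T (n : ℤ) : Gam ζ (T n) = (ζ⁻¹ ^ n) • T n := by
  show (Finsupp.lsum ℂ fun (n : ℤ) => LinearMap.toSpanSingleton ℂ Lau ((ζ⁻¹ ^ n) • T n))
    (Finsupp.single n 1) = _
  rw [Finsupp.lsum_single]
  rw [LinearMap.toSpanSingleton_apply, one_smul]

lemma Deriv_T (n : ℤ) : Deriv (T n) = (n : ℂ) • T (n - 1) := by
  show (Finsupp.lsum ℂ fun (n : ℤ) => LinearMap.toSpanSingleton ℂ Lau ((n : ℂ) • T (n - 1)))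
    (Finsupp.single n 1) = _
  rw [Finsupp.lsum_single]
  rw [LinearMap.toSpanSingleton_apply, one_smul]

lemma Gam_pow_T (j : ℕ) (n : ℤ) : ((Gam ζ) ^ j) (T n) = ((ζ⁻¹ ^ n) ^ j) • T n := by
  induction j with
  | zero => simp [Module.End.one_apply]
  | succ j ih =>
    rw [pow_succ, Module.End.mul_apply, Gam_T, map_smul, ih, smul_smul, pow_succ, mul_comm]

lemma emod_eq_iff_dvd (n : ℤ) (i : ℕ) (hi : i < l) :
    n % l = i ↔ (l : ℤ) ∣ ((i : ℤ) - n) := by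
  constructor
  · intro h
    have := Int.emod_emod_of_dvd n (dvd_refl (l : ℤ))
    have h2 : ((i : ℤ) - n) % l = 0 := by
      rw [← Int.emod_eq_emod_iff_emod_sub_eq_zero]
      rw [Int.emod_eq_of_lt (by positivity) (by exact_mod_cast hi)]
      exact h.symm
    exact Int.dvd_of_emod_eq_zero h2
  · intro h
    have h2 : (i : ℤ) % l = n % l := Int.emod_eq_emod_iff_emod_sub_eq_zero.2
      (Int.emod_eq_zero_of_dvd h)
    rw [← h2, Int.emod_eq_of_lt (by positivity) (by exact_mod_cast hi)]

lemma eIdem_T (hζ : IsPrimitiveRoot ζ l) (i : Fin l) (n : ℤ) :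
    eIdem l ζ i (T n) = if n % l = (i : ℕ) then T n else 0 := by
  have hζ0 : ζ ≠ 0 := hζ.ne_zero (NeZero.ne l)
  have hunit : ∀ j : ℕ, (ζ ^ ((i : ℕ) * j)) * ((ζ⁻¹ ^ n) ^ j) = (ζ ^ ((i : ℕ) - n : ℤ)) ^ j := by
    intro j
    rw [inv_zpow, ← zpow_neg, ← zpow_natCast (ζ ^ (-n)) j, ← zpow_mul,
      ← zpow_natCast ζ ((i : ℕ) * j), ← zpow_add₀ hζ0,
      ← zpow_natCast (ζ ^ ((i : ℕ) - n : ℤ)) j, ← zpow_mul]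
    congr 1
    push_cast
    ring
  have happ : eIdem l ζ i (T n)
      = ((l : ℂ)⁻¹ * ∑ j ∈ Finset.range l, (ζ ^ ((i : ℕ) - n : ℤ)) ^ j) • T n := by
    rw [eIdem, LinearMap.smul_apply, LinearMap.sum_apply]
    rw [Finset.sum_congr rfl fun j _ => by
      rw [LinearMap.smul_apply, Gam_pow_T, smul_smul, hunit j]]
    rw [← Finset.sum_smul, smul_smul]
  rw [happ]
  by_cases h : n % l = (i : ℕ)
  · rw [if_pos h]
    have hdvd : (l : ℤ) ∣ ((i : ℕ) - n : ℤ) := (emod_eq_iff_dvd l n i i.2).1 h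
    have hone : ζ ^ ((i : ℕ) - n : ℤ) = 1 := (hζ.zpow_eq_one_iff_dvd _).2 hdvd
    rw [hone]
    simp only [one_pow, Finset.sum_const, Finset.card_range, nsmul_eq_mul, mul_one]
    rw [inv_mul_cancel₀ (by exact_mod_cast (NeZero.ne l)), one_smul]
  · rw [if_neg h]
    have hne : ζ ^ ((i : ℕ) - n : ℤ) ≠ 1 := fun hc =>
      h ((emod_eq_iff_dvd l n i i.2).2 ((hζ.zpow_eq_one_iff_dvd _).1 hc))
    rw [geom_sum_eq hne]
    have : (ζ ^ ((i : ℕ) - n : ℤ)) ^ l - 1 = 0 := by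
      rw [← zpow_natCast, ← zpow_mul, mul_comm, zpow_mul, zpow_natCast, hζ.pow_eq_one,
        one_zpow, sub_self]
    rw [this, zero_div, mul_zero, zero_smul]

/-- The function `n ↦ κ_{n mod l}`. -/
def kap (n : ℤ) : ℂ := ∑ i : Fin l, if n % l = (i : ℕ) then κ i else 0

lemma kap_eq (n : ℤ) (i : Fin l) (h : n % l = (i : ℕ)) : kap l κ n = κ i := by
  rw [kap, Finset.sum_eq_single i (fun j _ hj => by
    rw [if_neg]
    rw [h]
    exact fun hc => hj (Fin.ext (by exact_mod_cast hc.symm))) (fun hc => (hc (Finset.mem_univ i)).elim)]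
  rw [if_pos h]

lemma sum_keIdem_T (hζ : IsPrimitiveRoot ζ l) (n : ℤ) :
    (∑ i : Fin l, κ i • eIdem l ζ i) (T n) = kap l κ n • T n := by
  rw [LinearMap.sum_apply, kap, Finset.sum_smul]
  refine Finset.sum_congr rfl fun i _ => ?_
  rw [LinearMap.smul_apply, eIdem_T l ζ hζ i n]
  by_cases h : n % l = (i : ℕ)
  · rw [if_pos h, if_pos h]
  · rw [if_neg h, if_neg h, smul_zero, zero_smul]

lemma Dunkl_T (hζ : IsPrimitiveRoot ζ l) (n : ℤ) :
    Dunkl l ζ κ (T n) = ((n : ℂ) + l * kap l κ n) • T (n - 1) := by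
  rw [Dunkl, LinearMap.add_apply, Deriv_T, LinearMap.smul_apply, Module.End.mul_apply,
    sum_keIdem_T l ζ κ hζ, map_smul, Zinv_T, smul_smul, add_smul]

/-- The product of eigenvalue factors for `Dunkl^k` applied to `zⁿ`. -/
def dprod (n : ℤ) (k : ℕ) : ℂ :=
  ∏ s ∈ Finset.range k, (((n - s : ℤ) : ℂ) + l * kap l κ (n - s))

lemma Dunkl_pow_T (hζ : IsPrimitiveRoot ζ l) (k : ℕ) (n : ℤ) :
    ((Dunkl l ζ κ) ^ k) (T n) = dprod l κ n k • T (n - k) := by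
  induction k generalizing n with
  | zero => simp [dprod, Module.End.one_apply]
  | succ k ih =>
    rw [pow_succ, Module.End.mul_apply, Dunkl_T l ζ κ hζ, map_smul, ih (n - 1), smul_smul]
    congr 1
    · rw [dprod, dprod, Finset.prod_range_succ']
      rw [mul_comm]
      congr 1
      · refine Finset.prod_congr rfl fun s _ => ?_
        have : n - 1 - (s : ℤ) = n - ((s : ℕ) + 1 : ℕ) := by push_cast; ring
        rw [this]
      · norm_num
    · congr 1
      push_cast
      ring

lemma Zmul_pow_T (k : ℕ) (n : ℤ) : (Zmul ^ k) (T n) = T (n + k) := by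
  induction k generalizing n with
  | zero => simp [Module.End.one_apply]
  | succ k ih =>
    rw [pow_succ, Module.End.mul_apply, Zmul_T, ih (n + 1)]
    congr 1
    push_cast
    ring

/-- The Euler operator `z d/dz` expressed via elements of the Cherednik algebra. -/
def Euler : Module.End ℂ Lau :=
  Zmul * Dunkl l ζ κ - (l : ℂ) • ∑ i : Fin l, κ i • eIdem l ζ i

lemma Euler_T (hζ : IsPrimitiveRoot ζ l) (n : ℤ) : Euler l ζ κ (T n) = (n : ℂ) • T n := by
  rw [Euler, LinearMap.sub_apply, Module.End.mul_apply, Dunkl_T l ζ κ hζ, map_smul, Zmul_T,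
    LinearMap.smul_apply, sum_keIdem_T l ζ κ hζ, smul_smul, sub_add_cancel, ← sub_smul]
  congr 1
  ring

lemma Euler_pow_T (hζ : IsPrimitiveRoot ζ l) (k : ℕ) (n : ℤ) :
    ((Euler l ζ κ) ^ k) (T n) = ((n : ℂ) ^ k) • T n := by
  induction k with
  | zero => simp [Module.End.one_apply]
  | succ k ih =>
    rw [pow_succ, Module.End.mul_apply, Euler_T l ζ κ hζ, map_smul, ih, smul_smul, pow_succ,
      mul_comm]

open Polynomial in
lemma aeval_Euler_T (hζ : IsPrimitiveRoot ζ l) (f : Polynomial ℂ) (n : ℤ) :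
    (Polynomial.aeval (Euler l ζ κ) f) (T n) = f.eval (n : ℂ) • T n := by
  induction f using Polynomial.induction_on' with
  | add p q hp hq => rw [map_add, LinearMap.add_apply, hp, hq, eval_add, add_smul]
  | monomial k c =>
    rw [Polynomial.aeval_monomial, eval_monomial, Module.End.mul_apply, Euler_pow_T l ζ κ hζ,
      map_smul, Module.algebraMap_end_apply, smul_smul, mul_comm]

lemma Zmul_mem : Zmul ∈ Cher l ζ κ :=
  Algebra.subset_adjoin (Set.mem_insert _ _)

lemma Gam_mem : Gam ζ ∈ Cher l ζ κ :=
  Algebra.subset_adjoin (Set.mem_insert_of_mem _ (Set.mem_insert _ _))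

lemma Dunkl_mem : Dunkl l ζ κ ∈ Cher l ζ κ :=
  Algebra.subset_adjoin (Set.mem_insert_of_mem _ (Set.mem_insert_of_mem _ rfl))

lemma eIdem_mem (i : Fin l) : eIdem l ζ i ∈ Cher l ζ κ := by
  rw [eIdem]
  exact Subalgebra.smul_mem _ (Subalgebra.sum_mem _ fun j _ =>
    Subalgebra.smul_mem _ (Subalgebra.pow_mem _ (Gam_mem l ζ κ) j) _) _

lemma Euler_mem : Euler l ζ κ ∈ Cher l ζ κ := by
  rw [Euler]
  exact Subalgebra.sub_mem _ (Subalgebra.mul_mem _ (Zmul_mem l ζ κ) (Dunkl_mem l ζ κ))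
    (Subalgebra.smul_mem _ (Subalgebra.sum_mem _ fun i _ =>
      Subalgebra.smul_mem _ (eIdem_mem l ζ κ i) _) _)

lemma aeval_mem {S : Subalgebra ℂ (Module.End ℂ Lau)} {x : Module.End ℂ Lau} (hx : x ∈ S)
    (f : Polynomial ℂ) : Polynomial.aeval x f ∈ S := by
  have : Polynomial.aeval x f = S.val (Polynomial.aeval (⟨x, hx⟩ : ↥S) f) := by
    rw [← Polynomial.aeval_algHom_apply]
    rfl
  rw [this]
  exact (Polynomial.aeval (⟨x, hx⟩ : ↥S) f).2

/-- The operator `zⁱ e₀ ∂ⁱ`. -/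
def Pop (i : ℕ) : Module.End ℂ Lau := Zmul ^ i * eIdem l ζ 0 * (Dunkl l ζ κ) ^ i

/-- The operator `∂^{l-i} e₀ z^{l-i}`. -/
def Qop (i : ℕ) : Module.End ℂ Lau := (Dunkl l ζ κ) ^ (l - i) * eIdem l ζ 0 * Zmul ^ (l - i)

lemma Pop_mem (i : ℕ) : Pop l ζ κ i ∈ Cher l ζ κ :=
  Subalgebra.mul_mem _ (Subalgebra.mul_mem _ (Subalgebra.pow_mem _ (Zmul_mem l ζ κ) _)
    (eIdem_mem l ζ κ 0)) (Subalgebra.pow_mem _ (Dunkl_mem l ζ κ) _)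

lemma Qop_mem (i : ℕ) : Qop l ζ κ i ∈ Cher l ζ κ :=
  Subalgebra.mul_mem _ (Subalgebra.mul_mem _ (Subalgebra.pow_mem _ (Dunkl_mem l ζ κ) _)
    (eIdem_mem l ζ κ 0)) (Subalgebra.pow_mem _ (Zmul_mem l ζ κ) _)

lemma Fin_zero_val : ((0 : Fin l) : ℕ) = 0 := rfl

lemma Pop_T (hζ : IsPrimitiveRoot ζ l) (i : ℕ) (n : ℤ) :
    Pop l ζ κ i (T n) = if (n - i) % l = 0 then dprod l κ n i • T n else 0 := by
  rw [Pop, Module.End.mul_apply, Module.End.mul_apply, Dunkl_pow_T l ζ κ hζ, map_smul, map_smul,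
    eIdem_T l ζ hζ 0, Fin_zero_val, Nat.cast_zero]
  by_cases h : (n - i) % l = 0
  · rw [if_pos h, if_pos h, Zmul_pow_T]
    congr 2
    ring
  · rw [if_neg h, if_neg h, map_zero, smul_zero]

lemma Qop_T (hζ : IsPrimitiveRoot ζ l) (i : ℕ) (n : ℤ) :
    Qop l ζ κ i (T n) = if (n + (l - i : ℕ)) % l = 0
      then dprod l κ (n + (l - i : ℕ)) (l - i) • T n else 0 := by
  rw [Qop, Module.End.mul_apply, Module.End.mul_apply, Zmul_pow_T,
    eIdem_T l ζ hζ 0, Fin_zero_val, Nat.cast_zero]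
  by_cases h : (n + (l - i : ℕ)) % l = 0
  · rw [if_pos h, if_pos h, Dunkl_pow_T l ζ κ hζ]
    congr 2
    ring
  · rw [if_neg h, if_neg h, map_zero]

lemma cond_P (i : ℕ) (hi : i < l) (n : ℤ) : (n - i) % l = 0 ↔ n % l = i := by
  rw [emod_eq_iff_dvd l n i hi]
  constructor
  · intro h
    exact (dvd_sub_comm).1 (Int.dvd_of_emod_eq_zero h)
  · intro h
    exact Int.emod_eq_zero_of_dvd ((dvd_sub_comm).1 h)

lemma cond_Q (i : ℕ) (hi : i < l) (n : ℤ) : (n + (l - i : ℕ)) % l = 0 ↔ n % l = i := by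
  rw [emod_eq_iff_dvd l n i hi]
  have hc : (n + (l - i : ℕ)) = (n - i) + l := by
    have : ((l - i : ℕ) : ℤ) = (l : ℤ) - i := by
      push_cast [Nat.cast_sub (le_of_lt hi)]
      ring
    rw [this]
    ring
  rw [hc]
  constructor
  · intro h
    have : (l : ℤ) ∣ (n - i) + l := Int.dvd_of_emod_eq_zero h
    have h2 : (l : ℤ) ∣ (n - i) := (dvd_add_right (dvd_refl (l : ℤ))).1 (by rwa [add_comm] at this)
    exact (dvd_sub_comm).1 h2
  · intro h
    exact Int.emod_eq_zero_of_dvd (dvd_add ((dvd_sub_comm).1 h) (dvd_refl _))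

open Polynomial in
/-- `κ` extended to natural indices (`0` beyond the range). -/
def kk (t : ℕ) : ℂ := if h : t < l then κ ⟨t, h⟩ else 0

lemma kap_eq_kk (n : ℤ) (t : ℕ) (ht : t < l) (h : n % l = t) : kap l κ n = kk l κ t := by
  rw [kap_eq l κ n ⟨t, ht⟩ h, kk, dif_pos ht]

open Polynomial in
/-- The polynomial whose value at `n ≡ i` is the eigenvalue of `zⁱ e₀ ∂ⁱ`. -/
def pP (i : ℕ) : Polynomial ℂ :=
  ∏ s ∈ Finset.range i, (Polynomial.X - Polynomial.C ((s : ℂ) - l * kk l κ (i - s)))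

open Polynomial in
/-- The polynomial whose value at `n ≡ i` is the eigenvalue of `∂^{l-i} e₀ z^{l-i}`. -/
def qQ (i : ℕ) : Polynomial ℂ :=
  ∏ s ∈ Finset.range (l - i), (Polynomial.X - Polynomial.C (-((l : ℂ) - i - s) - l * kk l κ ((l - s) % l)))

open Polynomial in
lemma dprod_eq_pP (i : ℕ) (hi : i < l) (n : ℤ) (h : n % l = i) :
    dprod l κ n i = (pP l κ i).eval (n : ℂ) := by
  rw [dprod, pP, eval_prod]
  refine Finset.prod_congr rfl fun s hs => ?_
  have hsi : s < i := Finset.mem_range.1 hs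
  have hst : i - s < l := lt_of_le_of_lt (Nat.sub_le _ _) hi
  have hmod : (n - s) % l = ((i - s : ℕ) : ℤ) := by
    have h1 : (n - s) % l = ((i : ℤ) - s) % l := by
      rw [Int.emod_eq_emod_iff_emod_sub_eq_zero]
      rw [show n - (s : ℤ) - ((i : ℤ) - s) = n - i by ring]
      exact (cond_P l i hi n).2 h
    rw [h1, show (i : ℤ) - (s : ℤ) = ((i - s : ℕ) : ℤ) by omega]
    exact Int.emod_eq_of_lt (by positivity) (by exact_mod_cast hst)
  rw [kap_eq_kk l κ (n - s) (i - s) hst hmod, eval_sub, eval_X, eval_C]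
  push_cast
  ring

open Polynomial in
lemma dprod_eq_qQ (i : ℕ) (hi : i < l) (n : ℤ) (h : n % l = i) :
    dprod l κ (n + (l - i : ℕ)) (l - i) = (qQ l κ i).eval (n : ℂ) := by
  rw [dprod, qQ, eval_prod]
  refine Finset.prod_congr rfl fun s hs => ?_
  have hsi : s < l - i := Finset.mem_range.1 hs
  have hsl : s < l := lt_of_lt_of_le hsi (Nat.sub_le _ _)
  have hst : (l - s) % l < l := Nat.mod_lt _ (Nat.pos_of_ne_zero (NeZero.ne l))
  have hcast : ((l - i : ℕ) : ℤ) = (l : ℤ) - i := by omega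
  have hmod : (n + (l - i : ℕ) - s) % l = (((l - s) % l : ℕ) : ℤ) := by
    have h2 : (((l - s) % l : ℕ) : ℤ) = ((l : ℤ) - s) % l := by
      rw [Int.natCast_mod]
      congr 1
      omega
    rw [h2, Int.emod_eq_emod_iff_emod_sub_eq_zero, hcast,
      show n + ((l : ℤ) - i) - s - ((l : ℤ) - s) = n - i by ring]
    exact (cond_P l i hi n).2 h
  rw [kap_eq_kk l κ _ _ hst hmod, eval_sub, eval_X, eval_C, hcast]
  push_cast
  ring

lemma kk_mod (hκ0 : κ 0 = 0) (s : ℕ) (hs : s < l) : kk l κ ((l - s) % l) = kk l κ (l - s) := by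
  rcases Nat.eq_zero_or_pos s with h0 | hpos
  · subst h0
    rw [Nat.sub_zero, Nat.mod_self, kk, kk, dif_neg (lt_irrefl l),
      dif_pos (Nat.pos_of_ne_zero (NeZero.ne l))]
    exact hκ0
  · congr 1
    exact Nat.mod_eq_of_lt (by omega)

open Polynomial in
lemma pq_coprime (hκ0 : κ 0 = 0)
    (hreg : ∀ i j : ℕ, 0 < i → i < j → j ≤ l →
      kk l κ i - kk l κ j ≠ ((j : ℂ) - (i : ℂ)) / (l : ℂ)) (i : ℕ) (hi : i < l) :
    IsCoprime (pP l κ i) (qQ l κ i) := by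
  rw [pP, qQ]
  apply IsCoprime.prod_left
  intro s hs
  apply IsCoprime.prod_right
  intro s' hs'
  have hsi : s < i := Finset.mem_range.1 hs
  have hsi' : s' < l - i := Finset.mem_range.1 hs'
  apply isCoprime_X_sub_C_of_isUnit_sub
  rw [isUnit_iff_ne_zero, sub_ne_zero]
  rw [kk_mod l κ hκ0 s' (by omega)]
  intro hc
  have hl0 : (l : ℂ) ≠ 0 := Nat.cast_ne_zero.2 (NeZero.ne l)
  apply hreg (i - s) (l - s') (by omega) (by omega) (by omega)
  have h1 : ((i - s : ℕ) : ℂ) = (i : ℂ) - s := by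
    push_cast [Nat.cast_sub (le_of_lt hsi)]; ring
  have h2 : ((l - s' : ℕ) : ℂ) = (l : ℂ) - s' := by
    push_cast [Nat.cast_sub (show s' ≤ l by omega)]; ring
  rw [h1, h2]
  field_simp
  -- from hc : s - l * kk (i-s) = -(l - i - s') - l * kk (l - s')
  have : (s : ℂ) - l * kk l κ (i - s) = -((l : ℂ) - i - s') - l * kk l κ (l - s') := hc
  ring_nf
  ring_nf at this
  linear_combination -this

open Polynomial in
lemma per_i (hζ : IsPrimitiveRoot ζ l) (hκ0 : κ 0 = 0)
    (hreg : ∀ i j : ℕ, 0 < i → i < j → j ≤ l →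
      kk l κ i - kk l κ j ≠ ((j : ℂ) - (i : ℂ)) / (l : ℂ)) (i : ℕ) :
    ∃ u v : Polynomial ℂ, i < l → ∀ n : ℤ,
      (Polynomial.aeval (Euler l ζ κ) u * Pop l ζ κ i
        + Polynomial.aeval (Euler l ζ κ) v * Qop l ζ κ i) (T n)
      = if n % l = i then T n else 0 := by
  by_cases hi : i < l
  · obtain ⟨u, v, huv⟩ := pq_coprime l κ hκ0 hreg i hi
    refine ⟨u, v, fun _ n => ?_⟩
    rw [LinearMap.add_apply, Module.End.mul_apply, Module.End.mul_apply,
      Pop_T l ζ κ hζ i n, Qop_T l ζ κ hζ i n]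
    by_cases h : n % l = i
    · rw [if_pos ((cond_P l i hi n).2 h), if_pos ((cond_Q l i hi n).2 h), if_pos h,
        map_smul, map_smul, aeval_Euler_T l ζ κ hζ, aeval_Euler_T l ζ κ hζ,
        smul_smul, smul_smul, ← add_smul, dprod_eq_pP l κ i hi n h, dprod_eq_qQ l κ i hi n h]
      have : (pP l κ i).eval (n : ℂ) * u.eval (n : ℂ)
          + (qQ l κ i).eval (n : ℂ) * v.eval (n : ℂ)
          = (u * pP l κ i + v * qQ l κ i).eval (n : ℂ) := by
        rw [eval_add, eval_mul, eval_mul]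
        ring
      rw [this, huv, eval_one, one_smul]
    · rw [if_neg (fun hc => h ((cond_P l i hi n).1 hc)),
        if_neg (fun hc => h ((cond_Q l i hi n).1 hc)), if_neg h,
        map_zero, map_zero, add_zero]
  · exact ⟨0, 0, fun hc => absurd hc hi⟩

/-- Linear endomorphisms of `Lau` agreeing on all monomials are equal. -/
lemma end_ext {f g : Module.End ℂ Lau} (h : ∀ n : ℤ, f (T n) = g (T n)) : f = g := by
  apply AddMonoidAlgebra.lhom_ext'
  intro n
  apply LinearMap.ext
  intro c
  have hc : (AddMonoidAlgebra.single n c : Lau) = c • T n := by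
    rw [T_single, AddMonoidAlgebra.smul_single', mul_one]
  rw [LinearMap.comp_apply, LinearMap.comp_apply, AddMonoidAlgebra.lsingle_apply, hc,
    map_smul, map_smul]
  exact congrArg (c • ·) (h n)

open Polynomial in
lemma sum_proj_one (hζ : IsPrimitiveRoot ζ l) (u v : ℕ → Polynomial ℂ)
    (hp : ∀ i, i < l → ∀ n : ℤ,
      (Polynomial.aeval (Euler l ζ κ) (u i) * Pop l ζ κ i
        + Polynomial.aeval (Euler l ζ κ) (v i) * Qop l ζ κ i) (T n)
      = if n % l = i then T n else 0) :
    ∑ i ∈ Finset.range l, (Polynomial.aeval (Euler l ζ κ) (u i) * Pop l ζ κ i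
        + Polynomial.aeval (Euler l ζ κ) (v i) * Qop l ζ κ i) = 1 := by
  apply end_ext
  intro n
  rw [LinearMap.sum_apply, Module.End.one_apply]
  rw [Finset.sum_congr rfl fun i hi => hp i (Finset.mem_range.1 hi) n]
  have h0 : 0 ≤ n % l := Int.emod_nonneg n (by exact_mod_cast (NeZero.ne l))
  have hlt : n % l < l := Int.emod_lt_of_pos n (by exact_mod_cast Nat.pos_of_ne_zero (NeZero.ne l))
  have hmem : (n % l).toNat ∈ Finset.range l := Finset.mem_range.2 (by omega)
  rw [Finset.sum_eq_single_of_mem (n % l).toNat hmem (fun j _ hj => by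
    rw [if_neg]
    intro hc
    exact hj (by omega))]
  rw [if_pos (by omega)]

lemma eIdem_sq (hζ : IsPrimitiveRoot ζ l) :
    eIdem l ζ 0 * eIdem l ζ 0 = eIdem l ζ 0 := by
  apply end_ext
  intro n
  rw [Module.End.mul_apply, eIdem_T l ζ hζ 0 n]
  by_cases h : n % l = ((0 : Fin l) : ℕ)
  · rw [if_pos h, eIdem_T l ζ hζ 0 n, if_pos h]
  · rw [if_neg h, map_zero]

end Computation
set_option maxHeartbeats 1000000 in
set_option synthInstance.maxHeartbeats 1000000 in
/-- Lemma 13: Morita equivalence of the rational Cherednik algebra `H_κ` of type `ℤ/lℤ`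
with its spherical subalgebra `e_0 H_κ e_0`.  Setting `κ_l = 0`, assume
`κ_i − κ_j ≠ (j−i)/l` for all integers `0 < i < j ≤ l` (equivalently
`c_i + ⋯ + c_{j−1} ≠ 0` where `c_i = κ_i − κ_{i+1} − 1/l + δ_{i,0}`).  Then
`e_0 H_κ e_0 = {e_0 h e_0 : h ∈ H_κ}` is a ring with multiplicative identity `e_0`, and
the functor `M ↦ e_0·M` from left `H_κ`-modules to left `e_0 H_κ e_0`-modules is an
equivalence of categories; in particular `H_κ` and `e_0 H_κ e_0` are Morita equivalent. -/
theorem morita_equivalence_spherical (l : ℕ) [NeZero l] (ζ : ℂ)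
    (hζ : ζ = Complex.exp (2 * Real.pi * Complex.I / l))
    (κ : Fin l → ℂ) (hκ0 : κ 0 = 0)
    (hreg : ∀ i j : ℕ, 0 < i → i < j → j ≤ l →
      (if hi : i < l then κ ⟨i, hi⟩ else 0) - (if hj : j < l then κ ⟨j, hj⟩ else 0) ≠
        ((j : ℂ) - (i : ℂ)) / (l : ℂ)) :
    ∃ (he0 : eIdem l ζ 0 ∈ Cher l ζ κ)
      (hε : Fact (IsIdempotentElem (⟨eIdem l ζ 0, he0⟩ : ↥(Cher l ζ κ)))),
      ((1 : ↥(cornerSubring (⟨eIdem l ζ 0, he0⟩ : ↥(Cher l ζ κ)))) : ↥(Cher l ζ κ)) =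
          ⟨eIdem l ζ 0, he0⟩ ∧
      (cornerFunctor (⟨eIdem l ζ 0, he0⟩ : ↥(Cher l ζ κ))).IsEquivalence := by
  classical
  have hζp : IsPrimitiveRoot ζ l := by
    rw [hζ]; exact Complex.isPrimitiveRoot_exp l (NeZero.ne l)
  have he0 : eIdem l ζ 0 ∈ Cher l ζ κ := eIdem_mem l ζ κ 0
  set εc : ↥(Cher l ζ κ) := (⟨eIdem l ζ 0, he0⟩ : ↥(Cher l ζ κ)) with hεc
  have hidem : IsIdempotentElem εc := Subtype.ext (eIdem_sq l ζ hζp)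
  haveI hfact : Fact (IsIdempotentElem εc) := ⟨hidem⟩
  refine ⟨he0, hfact, rfl, ?_⟩
  -- the regularity hypothesis in terms of `kk`
  have hreg' : ∀ i j : ℕ, 0 < i → i < j → j ≤ l →
      kk l κ i - kk l κ j ≠ ((j : ℂ) - (i : ℂ)) / (l : ℂ) := fun i j h1 h2 h3 =>
    hreg i j h1 h2 h3
  have hall := fun i => per_i l ζ κ hζp hκ0 hreg' i
  choose u v hp using hall
  have hsum := sum_proj_one l ζ κ hζp u v (fun i hi n => hp i hi n)
  -- the decomposition of 1 inside the Cherednik algebra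
  let aa : ℕ × Bool → ↥(Cher l ζ κ) := fun p =>
    if p.2 then ⟨Polynomial.aeval (Euler l ζ κ) (u p.1) * Zmul ^ p.1,
      Subalgebra.mul_mem _ (aeval_mem (Euler_mem l ζ κ) _)
        (Subalgebra.pow_mem _ (Zmul_mem l ζ κ) _)⟩
    else ⟨Polynomial.aeval (Euler l ζ κ) (v p.1) * (Dunkl l ζ κ) ^ (l - p.1),
      Subalgebra.mul_mem _ (aeval_mem (Euler_mem l ζ κ) _)
        (Subalgebra.pow_mem _ (Dunkl_mem l ζ κ) _)⟩
  let bb : ℕ × Bool → ↥(Cher l ζ κ) := fun p =>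
    if p.2 then ⟨(Dunkl l ζ κ) ^ p.1, Subalgebra.pow_mem _ (Dunkl_mem l ζ κ) _⟩
    else ⟨Zmul ^ (l - p.1), Subalgebra.pow_mem _ (Zmul_mem l ζ κ) _⟩
  have hab : ∑ p ∈ Finset.range l ×ˢ (Finset.univ : Finset Bool), aa p * εc * bb p = 1 := by
    apply Subtype.ext
    rw [AddSubmonoidClass.coe_finset_sum]
    show _ = (1 : Module.End ℂ Lau)
    rw [← hsum, Finset.sum_product]
    refine Finset.sum_congr rfl fun i _ => ?_
    rw [show (Finset.univ : Finset Bool) = {true, false} from rfl]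
    rw [Finset.sum_insert (by simp), Finset.sum_singleton]
    show (Polynomial.aeval (Euler l ζ κ) (u i) * Zmul ^ i) * eIdem l ζ 0 * (Dunkl l ζ κ) ^ i
      + (Polynomial.aeval (Euler l ζ κ) (v i) * (Dunkl l ζ κ) ^ (l - i)) * eIdem l ζ 0
          * Zmul ^ (l - i) = _
    rw [Pop, Qop]
    noncomm_ring
  exact { faithful := corner_faithful εc _ aa bb hab
          full := corner_full εc _ aa bb hab
          essSurj := corner_essSurj εc }
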